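/- Let G be a finite group with a normal cyclic Sylow p-subgroup P. Then either P ≤ G' (the commutator subgroup) or P ≤ Z(G) (the center). -/

import Mathlib

open Subgroup Finset
open scoped commutatorElement

/-- A normal cyclic Sylow `p`-subgroup of a finite group is contained either
in the commutator subgroup or in the center. -/
theorem normal_cyclic_sylow_le_commutator_or_center {p : ℕ} [Fact p.Prime]
    {G : Type*} [Group G] [Finite G] (P : Sylow p G)
    (hnorm : (P : Subgroup G).Normal) (hcyc : IsCyclic (P : Subgroup G)) :
    (P : Subgroup G) ≤ commutator G ∨ (P : Subgroup G) ≤ Subgroup.center G := by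
  haveI : Fact p.Prime := inferInstance
  have hp : p.Prime := Fact.out
  obtain ⟨ζ, hζ⟩ := hcyc.exists_generator
  set z : G := (ζ : G) with hzdef
  have hzP : z ∈ (P : Subgroup G) := ζ.2
  have hP : (P : Subgroup G) = Subgroup.zpowers z := by
    refine le_antisymm ?_ (Subgroup.zpowers_le.mpr hzP)
    intro x hx
    obtain ⟨n, hn⟩ := hζ ⟨x, hx⟩
    exact ⟨n, congrArg Subtype.val hn⟩
  obtain ⟨e, he⟩ := P.2.exists_card_eq
  have hord : orderOf z = p ^ e := by
    rw [hzdef, Subgroup.orderOf_coe, orderOf_eq_card_of_forall_mem_zpowers hζ, he]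
  -- Key: if some `g` fails to centralize `z`, then `z ∈ commutator G`.
  have key : ∀ g : G, g * z * g⁻¹ ≠ z → z ∈ commutator G := by
    intro g hg
    have hconj : g * z * g⁻¹ ∈ (P : Subgroup G) := hnorm.conj_mem z hzP g
    rw [hP, Subgroup.mem_zpowers_iff] at hconj
    obtain ⟨k, hk⟩ := hconj
    -- iterated conjugation
    have hiter : ∀ j : ℕ, g ^ j * z * (g ^ j)⁻¹ = z ^ (k ^ j) := by
      intro j; induction j with
      | zero => simp
      | succ j ih =>
        have h1 : g ^ (j + 1) * z * (g ^ (j + 1))⁻¹ =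
            g * (g ^ j * z * (g ^ j)⁻¹) * g⁻¹ := by
          rw [pow_succ']
          group
        rw [h1, ih]
        calc g * z ^ k ^ j * g⁻¹ = (g * z * g⁻¹) ^ (k ^ j) := by rw [conj_zpow]
          _ = (z ^ k) ^ (k ^ j) := by rw [hk]
          _ = z ^ k ^ (j + 1) := by rw [← zpow_mul, pow_succ']
    set n := orderOf g with hn
    have hn0 : n ≠ 0 := (orderOf_pos g).ne'
    set m := n / p ^ n.factorization p with hm
    have hpm : ¬ p ∣ m := Nat.not_dvd_ordCompl hp hn0
    -- `g ^ m` is a `p`-element, hence lies in `P`, hence centralizes `z`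
    have hgm : orderOf (g ^ m) = p ^ n.factorization p := by
      have hg1 : Nat.gcd n m = m := Nat.gcd_eq_right (Nat.ordCompl_dvd n p)
      have hg2 : n = p ^ n.factorization p * m := (Nat.ordProj_mul_ordCompl_eq_self n p).symm
      rw [orderOf_pow, ← hn, hg1, Nat.div_eq_of_eq_mul_left (Nat.ordCompl_pos p hn0) hg2]
    have hmemP : g ^ m ∈ (P : Subgroup G) := by
      have hpg : IsPGroup p (Subgroup.zpowers (g ^ m)) :=
        IsPGroup.of_card (by rw [Nat.card_zpowers, hgm])
      obtain ⟨Q, hQ⟩ := hpg.exists_le_sylow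
      haveI : P.Normal := hnorm
      obtain ⟨x, hx⟩ := MulAction.exists_smul_eq G P Q
      rw [Sylow.smul_eq_of_normal] at hx
      exact hx ▸ hQ (Subgroup.mem_zpowers (g ^ m))
    have hcent : g ^ m * z * (g ^ m)⁻¹ = z := by
      letI : CommGroup (P : Subgroup G) := IsCyclic.commGroup
      have h1 : (⟨g ^ m, hmemP⟩ : (P : Subgroup G)) * ζ = ζ * ⟨g ^ m, hmemP⟩ :=
        mul_comm _ _
      have h2 : g ^ m * z = z * g ^ m := congrArg Subtype.val h1
      rw [h2, mul_inv_cancel_right]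
    -- hence `k ^ m ≡ 1 [ZMOD p ^ e]`
    have hmod : ((p : ℤ) ^ e) ∣ k ^ m - 1 := by
      have h3 : z ^ (k ^ m : ℤ) = z ^ (1 : ℤ) := by
        rw [← hiter m, hcent, zpow_one]
      have h4 := zpow_eq_zpow_iff_modEq.mp h3
      rw [hord] at h4
      have h5 := (h4.symm).dvd
      exact_mod_cast h5
    -- the geometric sum is not divisible by `p` if `p ∣ k - 1`
    have hknot : ¬ ((p : ℤ) ∣ k - 1) := by
      intro hdvd
      apply hg
      have hgeom : (k - 1) * (∑ j ∈ Finset.range m, k ^ j) = k ^ m - 1 :=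
        mul_geom_sum k m
      have hSm : (p : ℤ) ∣ (∑ j ∈ Finset.range m, k ^ j) - m := by
        have : (∑ j ∈ Finset.range m, k ^ j) - m =
            ∑ j ∈ Finset.range m, (k ^ j - 1) := by
          rw [Finset.sum_sub_distrib, Finset.sum_const, Finset.card_range]
          simp
        rw [this]
        exact Finset.dvd_sum fun j _ => hdvd.trans (by simpa using sub_dvd_pow_sub_pow k 1 j)
      have hpS : ¬ ((p : ℤ) ∣ ∑ j ∈ Finset.range m, k ^ j) := by
        intro h
        have hd : (p : ℤ) ∣ (m : ℤ) := by
          have := dvd_sub h hSm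
          simpa using this
        exact hpm (Int.ofNat_dvd.mp hd)
      have hcop : IsCoprime ((p : ℤ) ^ e) (∑ j ∈ Finset.range m, k ^ j) :=
        ((Nat.prime_iff_prime_int.mp hp).coprime_iff_not_dvd.mpr hpS).pow_left
      have hdvd2 : ((p : ℤ) ^ e) ∣ (k - 1) * (∑ j ∈ Finset.range m, k ^ j) := by
        rw [hgeom]; exact hmod
      have hfin : ((p : ℤ) ^ e) ∣ k - 1 := hcop.dvd_of_dvd_mul_right hdvd2
      have : z ^ k = z ^ (1 : ℤ) := by
        refine zpow_eq_zpow_iff_modEq.mpr ?_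
        rw [hord]
        exact (Int.modEq_iff_dvd.mpr (by simpa using (dvd_neg.mpr hfin))).symm.symm
      rw [← hk]
      simpa using this
    -- so `k - 1` is coprime to `p ^ e` and `z` is a power of the commutator `⁅g, z⁆`
    have hcop : IsCoprime (k - 1) ((p : ℤ) ^ e) :=
      (((Nat.prime_iff_prime_int.mp hp).coprime_iff_not_dvd.mpr hknot).symm).pow_right
    obtain ⟨u, v, huv⟩ := hcop
    have hzk1 : z ^ (k - 1) = ⁅g, z⁆ := by
      rw [commutatorElement_def, ← hk, zpow_sub, zpow_one]
    have hzc : z ^ (k - 1) ∈ commutator G := by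
      rw [hzk1, _root_.commutator_def]
      exact Subgroup.commutator_mem_commutator (Subgroup.mem_top g) (Subgroup.mem_top z)
    have hz1 : z = (z ^ (k - 1)) ^ u := by
      have hz0 : z ^ ((p : ℤ) ^ e) = 1 := by
        rw [show ((p : ℤ) ^ e) = ((p ^ e : ℕ) : ℤ) by push_cast; ring, zpow_natCast,
          ← hord, pow_orderOf_eq_one]
      calc z = z ^ (u * (k - 1) + v * (p : ℤ) ^ e) := by rw [huv, zpow_one]
        _ = (z ^ (k - 1)) ^ u * (z ^ ((p : ℤ) ^ e)) ^ v := by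
            rw [zpow_add, mul_comm u, mul_comm v, zpow_mul, zpow_mul]
        _ = (z ^ (k - 1)) ^ u := by rw [hz0, one_zpow, mul_one]
    rw [hz1]
    exact Subgroup.zpow_mem _ hzc u
  by_cases hc : ∀ g : G, g * z * g⁻¹ = z
  · right
    rw [hP, Subgroup.zpowers_le]
    rw [Subgroup.mem_center_iff]
    intro g
    have := hc g
    rw [mul_inv_eq_iff_eq_mul] at this
    exact this
  · left
    push_neg at hc
    obtain ⟨g, hg⟩ := hc
    rw [hP, Subgroup.zpowers_le]
    exact key g hg
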